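/- Let c : ℝ → ℝ be smooth with c(0) = -4 and c'(0) = 0, and let Δ be the nonnegative Laplacian on a closed surface Σ. Suppose ω : ℝ → C^∞(Σ) is smooth with ω(0) = 0 and satisfies -4 = e^{-2ω(s)}(c̃(s) + Δ_s ω(s)) for a smooth family of curvature functions c̃(s) with c̃(s) = -4 + (1/2)κ̈s² + O(s³) and Laplacians Δ_s = Δ + O(s). Then the Taylor expansion ω(s) = sω₁ + s²ω₂ + O(s³) satisfies (Δ+8)ω₁ = 0 (hence ω₁ = 0) and (Δ+8)ω₂ = -κ̈/2. -/

import Mathlib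

open Asymptotics Filter

private lemma pow_isBigO_pow_of_le {n m : ℕ} (h : m ≤ n) :
    (fun s : ℝ => s ^ n) =O[nhds 0] fun s : ℝ => s ^ m := by
  apply IsBigO.of_bound 1
  have habs : ∀ᶠ s : ℝ in nhds 0, |s| < 1 := by
    have : Tendsto (fun s : ℝ => |s|) (nhds 0) (nhds 0) := by
      simpa using (continuous_abs.tendsto (0 : ℝ))
    exact this.eventually_lt_const one_pos
  filter_upwards [habs] with s hs
  rw [Real.norm_eq_abs, Real.norm_eq_abs, abs_pow, abs_pow, one_mul]
  exact pow_le_pow_of_le_one (abs_nonneg s) hs.le h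

private lemma smul_pow_vanish {E : Type*} [NormedAddCommGroup E] [NormedSpace ℝ E]
    {v : E} {n : ℕ}
    (h : (fun s : ℝ => s ^ n • v) =O[nhds 0] fun s : ℝ => s ^ (n + 1)) : v = 0 := by
  obtain ⟨C, hC⟩ := h.bound
  have h' : ∀ᶠ s : ℝ in nhdsWithin 0 {(0 : ℝ)}ᶜ, ‖v‖ ≤ C * |s| := by
    filter_upwards [nhdsWithin_le_nhds hC, self_mem_nhdsWithin] with s hs hs0
    have hs0' : s ≠ 0 := hs0
    have hpos : 0 < |s| ^ n := pow_pos (abs_pos.mpr hs0') n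
    have hs' : |s| ^ n * ‖v‖ ≤ C * |s| * |s| ^ n := by
      have : ‖s ^ n • v‖ = |s| ^ n * ‖v‖ := by
        rw [norm_smul, Real.norm_eq_abs, abs_pow]
      rw [this] at hs
      calc |s| ^ n * ‖v‖ ≤ C * ‖s ^ (n + 1)‖ := hs
        _ = C * |s| * |s| ^ n := by
            rw [Real.norm_eq_abs, abs_pow, pow_succ]; ring
    have := le_of_mul_le_mul_right (by linarith [hs'] : ‖v‖ * |s| ^ n ≤ (C * |s|) * |s| ^ n) hpos
    exact this
  have htend : Tendsto (fun s : ℝ => C * |s|) (nhdsWithin 0 {(0 : ℝ)}ᶜ) (nhds 0) := by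
    have : Tendsto (fun s : ℝ => C * |s|) (nhds (0 : ℝ)) (nhds (C * |0|)) :=
      (continuous_const.mul continuous_abs).tendsto 0
    simpa using this.mono_left nhdsWithin_le_nhds
  have hle : ‖v‖ ≤ 0 := ge_of_tendsto htend h'
  simpa using norm_le_zero_iff.mp hle

/-- The key big-O estimate: if `ω = O(s^k)` then
`s • (Δω₁ + 8ω₁) + s² • (Δω₂ + 8ω₂ + (1/2)κ̈) = O(s^{k+1})`. -/
private lemma main_bigO
    {S : Type*} [TopologicalSpace S] [CompactSpace S]
    (Δ : C(S, ℝ) →L[ℝ] C(S, ℝ))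
    (Dfam : ℝ → C(S, ℝ) →L[ℝ] C(S, ℝ))
    (hD : (fun s : ℝ => ‖Dfam s - Δ‖) =O[nhds 0] fun s : ℝ => s)
    (ctilde : ℝ → C(S, ℝ)) (κdd : C(S, ℝ))
    (hc : (fun s : ℝ => ctilde s - ((-4 : C(S, ℝ)) + (s ^ 2 * (1 / 2)) • κdd))
      =O[nhds 0] fun s : ℝ => s ^ 3)
    (ω : ℝ → C(S, ℝ)) (ω₁ ω₂ : C(S, ℝ))
    (hωexp : (fun s : ℝ => ω s - (s • ω₁ + s ^ 2 • ω₂)) =O[nhds 0] fun s : ℝ => s ^ 3)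
    (heq : ∀ (s : ℝ) (x : S),
      (-4 : ℝ) = Real.exp (-2 * ω s x) * (ctilde s x + (Dfam s) (ω s) x))
    {k : ℕ} (hk1 : 1 ≤ k) (hk2 : k ≤ 2)
    (hωO : ω =O[nhds 0] fun s : ℝ => s ^ k) :
    (fun s : ℝ => s • (Δ ω₁ + (8 : ℝ) • ω₁)
        + s ^ 2 • (Δ ω₂ + (8 : ℝ) • ω₂ + ((1 / 2 : ℝ)) • κdd))
      =O[nhds 0] fun s : ℝ => s ^ (k + 1) := by
  -- the combination function g
  set g : ℝ → C(S, ℝ) := fun s =>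
    ctilde s + (Dfam s) (ω s) + 4 + (8 : ℝ) • ω s + (8 : ℝ) • (ω s * ω s) with hg
  -- pointwise formula for g
  have hGpt : ∀ (s : ℝ) (x : S),
      g s x = (-4) * (Real.exp (2 * ω s x) - (1 + 2 * ω s x + 2 * (ω s x) ^ 2)) := by
    intro s x
    have key : Real.exp (2 * ω s x) * (-4 : ℝ) = ctilde s x + (Dfam s) (ω s) x := by
      rw [heq s x, ← mul_assoc, ← Real.exp_add]
      ring_nf
      simp
    have hgx : g s x = ctilde s x + (Dfam s) (ω s) x + 4 + 8 * ω s x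
        + 8 * (ω s x * ω s x) := by
      have h4 : ((4 : C(S, ℝ)) : S → ℝ) x = 4 := rfl
      simp [hg, h4]
    rw [hgx, ← key]; ring
  -- eventual smallness of ω
  obtain ⟨Cω, hCω⟩ := hωO.bound
  have hsmall : ∀ᶠ s : ℝ in nhds 0, ‖ω s‖ ≤ 1 / 2 := by
    have htend : Tendsto (fun s : ℝ => Cω * ‖s ^ k‖) (nhds 0) (nhds 0) := by
      have : Tendsto (fun s : ℝ => Cω * ‖s ^ k‖) (nhds 0) (nhds (Cω * ‖(0 : ℝ) ^ k‖)) :=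
        (continuous_const.mul ((continuous_pow k).norm)).tendsto 0
      simpa [zero_pow (by omega : k ≠ 0)] using this
    filter_upwards [hCω, htend.eventually_lt_const (by norm_num : (0 : ℝ) < 1 / 2)]
      with s h1 h2
    exact h1.trans h2.le
  -- bound on g
  have hGbound : ∀ᶠ s : ℝ in nhds 0, ‖g s‖ ≤ 8 * ‖(‖ω s‖ ^ 3)‖ := by
    filter_upwards [hsmall] with s hs
    have h8 : (0 : ℝ) ≤ 8 * ‖ω s‖ ^ 3 := by positivity
    have : ‖g s‖ ≤ 8 * ‖ω s‖ ^ 3 := by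
      rw [ContinuousMap.norm_le _ h8]
      intro x
      set t : ℝ := ω s x with ht
      have htle : |t| ≤ ‖ω s‖ := (ω s).norm_coe_le_norm x
      have h2t : |2 * t| ≤ 1 := by
        rw [abs_mul]
        have : |t| ≤ 1 / 2 := htle.trans hs
        norm_num
        linarith
      have hb := Real.exp_bound h2t (by norm_num : 0 < 3)
      have hsum : ∑ i ∈ Finset.range 3, (2 * t) ^ i / (Nat.factorial i)
          = 1 + 2 * t + 2 * t ^ 2 := by
        simp [Finset.sum_range_succ, Nat.factorial]
        ring
      rw [hsum] at hb
      have hbb : |Real.exp (2 * t) - (1 + 2 * t + 2 * t ^ 2)| ≤ |2 * t| ^ 3 * (2 / 9) := by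
        convert hb using 2
        norm_num [Nat.factorial]
      have hgx : ‖g s x‖ = 4 * |Real.exp (2 * t) - (1 + 2 * t + 2 * t ^ 2)| := by
        rw [hGpt s x, Real.norm_eq_abs, abs_mul]
        norm_num
        rfl
      rw [hgx]
      have h2t3 : |2 * t| ^ 3 = 8 * |t| ^ 3 := by
        rw [abs_mul]; norm_num; ring
      have htn : |t| ^ 3 ≤ ‖ω s‖ ^ 3 := pow_le_pow_left₀ (abs_nonneg t) htle 3
      nlinarith [abs_nonneg (Real.exp (2 * t) - (1 + 2 * t + 2 * t ^ 2))]
    calc ‖g s‖ ≤ 8 * ‖ω s‖ ^ 3 := this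
      _ ≤ 8 * ‖(‖ω s‖ ^ 3)‖ := by
          rw [Real.norm_eq_abs, abs_of_nonneg (by positivity)]
  have hGO : g =O[nhds 0] fun s : ℝ => s ^ (3 * k) := by
    have h1 : g =O[nhds 0] fun s => ‖ω s‖ ^ 3 := IsBigO.of_bound 8 hGbound
    have h2 : (fun s : ℝ => ‖ω s‖ ^ 3) =O[nhds 0] fun s => (s ^ k) ^ 3 :=
      hωO.norm_left.pow 3
    exact (h1.trans h2).congr (fun _ => rfl) fun s => by rw [← pow_mul, mul_comm]
  -- the remainder
  set r : ℝ → C(S, ℝ) := fun s => ω s - (s • ω₁ + s ^ 2 • ω₂) with hr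
  -- individual big-O estimates, all against s ^ (k+1)
  have hk3 : k + 1 ≤ 3 := by omega
  have hG' : g =O[nhds 0] fun s : ℝ => s ^ (k + 1) :=
    hGO.trans (pow_isBigO_pow_of_le (by omega))
  have hc' : (fun s : ℝ => ctilde s - ((-4 : C(S, ℝ)) + (s ^ 2 * (1 / 2)) • κdd))
      =O[nhds 0] fun s : ℝ => s ^ (k + 1) :=
    hc.trans (pow_isBigO_pow_of_le hk3)
  have hΔr : (fun s : ℝ => Δ (r s)) =O[nhds 0] fun s : ℝ => s ^ (k + 1) :=
    ((Δ.isBigO_comp r (nhds 0)).trans hωexp).trans (pow_isBigO_pow_of_le hk3)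
  have hr' : (fun s : ℝ => (8 : ℝ) • r s) =O[nhds 0] fun s : ℝ => s ^ (k + 1) :=
    (hωexp.const_smul_left (8 : ℝ)).trans (pow_isBigO_pow_of_le hk3)
  have hDω : (fun s : ℝ => (Dfam s - Δ) (ω s)) =O[nhds 0] fun s : ℝ => s ^ (k + 1) := by
    have h1 : (fun s : ℝ => (Dfam s - Δ) (ω s))
        =O[nhds 0] fun s => ‖Dfam s - Δ‖ * ‖ω s‖ := by
      apply IsBigO.of_bound 1
      filter_upwards with s
      rw [one_mul, Real.norm_eq_abs, abs_of_nonneg (by positivity)]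
      exact (Dfam s - Δ).le_opNorm (ω s)
    have h2 : (fun s : ℝ => ‖Dfam s - Δ‖ * ‖ω s‖)
        =O[nhds 0] fun s : ℝ => s * s ^ k := hD.mul hωO.norm_left
    exact (h1.trans h2).congr (fun _ => rfl) fun s => by rw [pow_succ, mul_comm]
  have homsq : (fun s : ℝ => (8 : ℝ) • (ω s * ω s)) =O[nhds 0] fun s : ℝ => s ^ (k + 1) := by
    have h1 : (fun s : ℝ => ω s * ω s) =O[nhds 0] fun s => ‖ω s‖ * ‖ω s‖ := by
      apply IsBigO.of_bound 1
      filter_upwards with s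
      rw [one_mul, Real.norm_eq_abs, abs_of_nonneg (by positivity)]
      exact norm_mul_le _ _
    have h2 : (fun s : ℝ => ‖ω s‖ * ‖ω s‖) =O[nhds 0] fun s : ℝ => s ^ k * s ^ k :=
      hωO.norm_left.mul hωO.norm_left
    have h3 : (fun s : ℝ => ω s * ω s) =O[nhds 0] fun s : ℝ => s ^ (2 * k) :=
      (h1.trans h2).congr (fun _ => rfl) fun s => by rw [two_mul, pow_add]
    exact (h3.const_smul_left (8 : ℝ)).trans (pow_isBigO_pow_of_le (by omega))
  -- algebraic identity
  have hkey : ∀ s : ℝ,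
      s • (Δ ω₁ + (8 : ℝ) • ω₁) + s ^ 2 • (Δ ω₂ + (8 : ℝ) • ω₂ + ((1 / 2 : ℝ)) • κdd)
      = g s - (ctilde s - ((-4 : C(S, ℝ)) + (s ^ 2 * (1 / 2)) • κdd))
        - Δ (r s) - (Dfam s - Δ) (ω s) - (8 : ℝ) • r s - (8 : ℝ) • (ω s * ω s) := by
    intro s
    have hΔexp : Δ (r s) = Δ (ω s) - (s • Δ ω₁ + s ^ 2 • Δ ω₂) := by
      rw [hr]
      simp [map_sub, map_add, map_smul]
    rw [hg, hΔexp, hr, ContinuousLinearMap.sub_apply]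
    module
  exact (((((hG'.sub hc').sub hΔr).sub hDω).sub hr').sub homsq).congr_left
    fun s => (hkey s).symm

/-- Determination of the Taylor coefficients of the uniformizing conformal factor.
Functions on the closed surface Σ are modeled as continuous functions C(Σ,ℝ) with the
sup norm; Δ is the nonnegative Laplacian (its positivity entering only through the
triviality of the kernel of Δ + 8), Δ_s = Δ + O(s) a family of operators, c̃(s) the
curvature family with c̃(s) = -4 + (1/2)κ̈ s² + O(s³), and ω(s) = sω₁ + s²ω₂ + O(s³)
solves -4 = e^{-2ω(s)}(c̃(s) + Δ_s ω(s)). Then (Δ+8)ω₁ = 0 (hence ω₁ = 0) and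
(Δ+8)ω₂ = -κ̈/2. -/
theorem uniformizing_conformal_factor_taylor
    {S : Type*} [TopologicalSpace S] [CompactSpace S]
    (Δ : C(S, ℝ) →L[ℝ] C(S, ℝ))
    (hΔpos : ∀ f : C(S, ℝ), Δ f + (8 : ℝ) • f = 0 → f = 0)
    (Dfam : ℝ → C(S, ℝ) →L[ℝ] C(S, ℝ))
    (hD : (fun s : ℝ => ‖Dfam s - Δ‖) =O[nhds 0] fun s : ℝ => s)
    (ctilde : ℝ → C(S, ℝ)) (κdd : C(S, ℝ))
    (hc : (fun s : ℝ => ctilde s - ((-4 : C(S, ℝ)) + (s ^ 2 * (1 / 2)) • κdd))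
      =O[nhds 0] fun s : ℝ => s ^ 3)
    (ω : ℝ → C(S, ℝ)) (hω0 : ω 0 = 0)
    (ω₁ ω₂ : C(S, ℝ))
    (hωexp : (fun s : ℝ => ω s - (s • ω₁ + s ^ 2 • ω₂)) =O[nhds 0] fun s : ℝ => s ^ 3)
    (heq : ∀ (s : ℝ) (x : S),
      (-4 : ℝ) = Real.exp (-2 * ω s x) * (ctilde s x + (Dfam s) (ω s) x)) :
    (Δ ω₁ + (8 : ℝ) • ω₁ = 0 ∧ ω₁ = 0) ∧
    Δ ω₂ + (8 : ℝ) • ω₂ = (-(1 / 2) : ℝ) • κdd := by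
  set A : C(S, ℝ) := Δ ω₁ + (8 : ℝ) • ω₁ with hA
  set B : C(S, ℝ) := Δ ω₂ + (8 : ℝ) • ω₂ + ((1 / 2 : ℝ)) • κdd with hB
  -- first: ω = O(s)
  have hω1 : ω =O[nhds 0] fun s : ℝ => s ^ 1 := by
    have hp1 : (fun s : ℝ => s • ω₁) =O[nhds 0] fun s : ℝ => s ^ 1 := by
      apply IsBigO.of_bound ‖ω₁‖
      filter_upwards with s
      rw [norm_smul s ω₁, pow_one, mul_comm]
    have hp2 : (fun s : ℝ => s ^ 2 • ω₂) =O[nhds 0] fun s : ℝ => s ^ 1 := by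
      have : (fun s : ℝ => s ^ 2 • ω₂) =O[nhds 0] fun s : ℝ => s ^ 2 := by
        apply IsBigO.of_bound ‖ω₂‖
        filter_upwards with s
        rw [norm_smul (s ^ 2) ω₂, mul_comm, Real.norm_eq_abs (s ^ 2)]
      exact this.trans (pow_isBigO_pow_of_le (by omega))
    have hrest : (fun s : ℝ => ω s - (s • ω₁ + s ^ 2 • ω₂))
        =O[nhds 0] fun s : ℝ => s ^ 1 := hωexp.trans (pow_isBigO_pow_of_le (by omega))
    exact (((hrest.add hp1).add hp2)).congr_left fun s => by abel
  -- phase 1: A = 0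
  have hO1 := main_bigO Δ Dfam hD ctilde κdd hc ω ω₁ ω₂ hωexp heq
    (le_refl 1) (by omega) hω1
  have hB2 : (fun s : ℝ => s ^ 2 • B) =O[nhds 0] fun s : ℝ => s ^ 2 := by
    apply IsBigO.of_bound ‖B‖
    filter_upwards with s
    rw [norm_smul (s ^ 2) B, mul_comm, Real.norm_eq_abs (s ^ 2)]
  have hsA : (fun s : ℝ => s ^ 1 • A) =O[nhds 0] fun s : ℝ => s ^ (1 + 1) := by
    have := hO1.sub hB2
    refine (this.congr_left fun s => ?_).congr (fun _ => rfl) fun s => by norm_num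
    simp only [pow_one]
    abel
  have hA0 : A = 0 := smul_pow_vanish hsA
  have hω₁0 : ω₁ = 0 := hΔpos ω₁ hA0
  -- phase 2: ω = O(s²)
  have hω2 : ω =O[nhds 0] fun s : ℝ => s ^ 2 := by
    have hp2 : (fun s : ℝ => s ^ 2 • ω₂) =O[nhds 0] fun s : ℝ => s ^ 2 := by
      apply IsBigO.of_bound ‖ω₂‖
      filter_upwards with s
      rw [norm_smul (s ^ 2) ω₂, mul_comm, Real.norm_eq_abs (s ^ 2)]
    have hrest : (fun s : ℝ => ω s - (s • ω₁ + s ^ 2 • ω₂))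
        =O[nhds 0] fun s : ℝ => s ^ 2 := hωexp.trans (pow_isBigO_pow_of_le (by omega))
    refine ((hrest.add hp2)).congr_left fun s => ?_
    rw [hω₁0]
    simp
  have hO2 := main_bigO Δ Dfam hD ctilde κdd hc ω ω₁ ω₂ hωexp heq
    (by omega : 1 ≤ 2) (le_refl 2) hω2
  have hsB : (fun s : ℝ => s ^ 2 • B) =O[nhds 0] fun s : ℝ => s ^ (2 + 1) := by
    refine hO2.congr_left fun s => ?_
    rw [← hA, ← hB, hA0]
    simp
  have hB0 : B = 0 := smul_pow_vanish hsB
  refine ⟨⟨hA0, hω₁0⟩, ?_⟩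
  have : Δ ω₂ + (8 : ℝ) • ω₂ = -(((1 / 2 : ℝ)) • κdd) := by
    rw [eq_neg_iff_add_eq_zero]
    exact hB0
  rw [this, ← neg_smul]
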